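/- Let X be an essentially bounded real-valued random variable on a probability space (Ω, F, P). Then lim_{β → 0⁺} EVaR_β(X) = esssup(X), where esssup(X) denotes the essential supremum of X with respect to P. -/

import Mathlib

open MeasureTheory

/-- Entropic Value-at-Risk at level `β`: `EVaR_β(X) := inf_{z > 0} z⁻¹ ln (E[exp (z X)] / β)`. -/
noncomputable def EVaR {Ω : Type*} [MeasurableSpace Ω] (P : Measure Ω) (β : ℝ) (X : Ω → ℝ) : ℝ :=
  ⨅ z : Set.Ioi (0 : ℝ), ((z : ℝ)⁻¹ * Real.log ((∫ ω, Real.exp ((z : ℝ) * X ω) ∂P) / β))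

open Filter in
/-- `lim_{β → 0⁺} EVaR_β(X) = esssup X` for essentially bounded `X`. -/
theorem stmt_13 {Ω : Type*} [MeasurableSpace Ω] (P : Measure Ω) [IsProbabilityMeasure P]
    (X : Ω → ℝ) (hX : Measurable X) (hbdd : MemLp X ⊤ P) :
    Tendsto (fun β : ℝ => EVaR P β X) (nhdsWithin 0 (Set.Ioi 0)) (nhds (essSup X P)) := by
  classical
  obtain ⟨C, hC⟩ : ∃ C : ℝ, ∀ᵐ ω ∂P, |X ω| ≤ C := by
    refine ⟨(eLpNormEssSup X P).toReal, ?_⟩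
    have htop : eLpNormEssSup X P ≠ ⊤ := by
      have := hbdd.2
      rw [eLpNorm_exponent_top] at this
      exact this.ne
    filter_upwards [MeasureTheory.ae_le_eLpNormEssSup (f := X) (μ := P)] with ω hω
    rw [← Real.norm_eq_abs]
    have := ENNReal.toReal_mono htop hω
    simpa using this
  set M := essSup X P with hM
  have hboundUp : IsBoundedUnder (· ≤ ·) (ae P) X :=
    ⟨C, Filter.eventually_map.mpr (by filter_upwards [hC] with ω h using (abs_le.1 h).2)⟩
  have hboundLow : IsBoundedUnder (· ≥ ·) (ae P) X :=
    ⟨-C, Filter.eventually_map.mpr (by filter_upwards [hC] with ω h using (abs_le.1 h).1)⟩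
  have hXM : ∀ᵐ ω ∂P, X ω ≤ M := ae_le_essSup hboundUp
  -- integrability of exp (z * X)
  have hint : ∀ z : ℝ, 0 ≤ z → Integrable (fun ω => Real.exp (z * X ω)) P := by
    intro z hz
    refine (integrable_const (Real.exp (z * C))).mono'
      ((hX.const_mul z).exp.aestronglyMeasurable) ?_
    filter_upwards [hC] with ω h
    rw [Real.norm_eq_abs, abs_of_pos (Real.exp_pos _)]
    exact Real.exp_le_exp.2 (mul_le_mul_of_nonneg_left (le_trans (le_abs_self _) h) hz)
  rw [Metric.tendsto_nhdsWithin_nhds]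
  intro ε hε
  set ε' := ε / 2 with hε'def
  have hε' : 0 < ε' := by positivity
  set A : Set Ω := {ω | M - ε' < X ω} with hA
  have hAmeas : MeasurableSet A := measurableSet_lt measurable_const hX
  have hA0 : P A ≠ 0 := by
    intro h0
    have hle : ∀ᵐ ω ∂P, X ω ≤ M - ε' := by
      rw [ae_iff]
      convert h0 using 2
      ext ω
      simp [hA, not_le]
    have : M ≤ M - ε' := by
      rw [hM, essSup]
      exact Filter.limsup_le_of_le hboundLow.isCoboundedUnder_le
        (by exact hle)
    linarith
  set q : ℝ := (P A).toReal with hq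
  have hq0 : 0 < q := ENNReal.toReal_pos hA0 (measure_ne_top P A)
  refine ⟨min q 1, lt_min hq0 one_pos, ?_⟩
  intro β hβ hdist
  have hβ0 : 0 < β := hβ
  have hβq : β < q := by
    have := hdist
    rw [Real.dist_eq, sub_zero, abs_of_pos hβ0] at this
    exact lt_of_lt_of_le this (min_le_left _ _)
  have hβ1 : β < 1 := by
    have := hdist
    rw [Real.dist_eq, sub_zero, abs_of_pos hβ0] at this
    exact lt_of_lt_of_le this (min_le_right _ _)
  -- lower bound on the integral
  have hElow : ∀ z : ℝ, 0 ≤ z →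
      Real.exp (z * (M - ε')) * q ≤ ∫ ω, Real.exp (z * X ω) ∂P := by
    intro z hz
    have h1 : Real.exp (z * (M - ε')) * q ≤ ∫ ω in A, Real.exp (z * X ω) ∂P := by
      refine (le_of_eq ?_).trans (setIntegral_ge_of_const_le_real (c := Real.exp (z * (M - ε'))) hAmeas (measure_ne_top P A) ?_
        ((hint z hz).integrableOn))
      · rfl
      intro ω hω
      exact Real.exp_le_exp.2 (mul_le_mul_of_nonneg_left (le_of_lt hω) hz)
    exact h1.trans (setIntegral_le_integral (hint z hz)
      (Filter.Eventually.of_forall fun ω => (Real.exp_pos _).le))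
  have hEpos : ∀ z : ℝ, 0 ≤ z → 0 < ∫ ω, Real.exp (z * X ω) ∂P := fun z hz =>
    lt_of_lt_of_le (by positivity) (hElow z hz)
  -- upper bound on the integral
  have hEup : ∀ z : ℝ, 0 ≤ z →
      (∫ ω, Real.exp (z * X ω) ∂P) ≤ Real.exp (z * M) := by
    intro z hz
    calc (∫ ω, Real.exp (z * X ω) ∂P) ≤ ∫ _ω, Real.exp (z * M) ∂P := by
          refine integral_mono_ae (hint z hz) (integrable_const _) ?_
          filter_upwards [hXM] with ω h
          exact Real.exp_le_exp.2 (mul_le_mul_of_nonneg_left h hz)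
      _ = Real.exp (z * M) := by simp
  -- per-z lower bound on the objective
  have hlow : ∀ z : Set.Ioi (0 : ℝ),
      M - ε' ≤ (z : ℝ)⁻¹ * Real.log ((∫ ω, Real.exp ((z : ℝ) * X ω) ∂P) / β) := by
    rintro ⟨z, hz⟩
    simp only
    have hz' : (0 : ℝ) < z := hz
    have hlog : z * (M - ε') ≤ Real.log ((∫ ω, Real.exp (z * X ω) ∂P) / β) := by
      have h1 : Real.exp (z * (M - ε')) ≤ (∫ ω, Real.exp (z * X ω) ∂P) / β := by
        rw [le_div_iff₀ hβ0]
        calc Real.exp (z * (M - ε')) * β ≤ Real.exp (z * (M - ε')) * q := by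
              exact mul_le_mul_of_nonneg_left hβq.le (Real.exp_pos _).le
          _ ≤ _ := hElow z hz'.le
      calc z * (M - ε') = Real.log (Real.exp (z * (M - ε'))) := (Real.log_exp _).symm
        _ ≤ _ := (Real.log_le_log_iff (Real.exp_pos _)
              (lt_of_lt_of_le (Real.exp_pos _) h1)).2 h1
    calc M - ε' = z⁻¹ * (z * (M - ε')) := by field_simp
      _ ≤ _ := mul_le_mul_of_nonneg_left hlog (inv_nonneg.2 hz'.le)
  have hbdd_below : BddBelow (Set.range fun z : Set.Ioi (0 : ℝ) =>
      (z : ℝ)⁻¹ * Real.log ((∫ ω, Real.exp ((z : ℝ) * X ω) ∂P) / β)) := by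
    refine ⟨M - ε', ?_⟩
    rintro x ⟨z, rfl⟩
    exact hlow z
  have hlower : M - ε' ≤ EVaR P β X := le_ciInf hlow
  -- upper bound : EVaR ≤ M + z⁻¹ log β⁻¹ for each z
  have hup : ∀ z : ℝ, 0 < z → EVaR P β X ≤ M + z⁻¹ * Real.log β⁻¹ := by
    intro z hz
    have h1 : EVaR P β X ≤ z⁻¹ * Real.log ((∫ ω, Real.exp (z * X ω) ∂P) / β) :=
      ciInf_le hbdd_below ⟨z, hz⟩
    refine h1.trans ?_
    have hlog : Real.log ((∫ ω, Real.exp (z * X ω) ∂P) / β)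
        ≤ z * M + Real.log β⁻¹ := by
      have h2 : (∫ ω, Real.exp (z * X ω) ∂P) / β ≤ Real.exp (z * M) / β := by
        gcongr
        exact hEup z hz.le
      calc Real.log ((∫ ω, Real.exp (z * X ω) ∂P) / β)
          ≤ Real.log (Real.exp (z * M) / β) :=
            (Real.log_le_log_iff (div_pos (hEpos z hz.le) hβ0)
              (div_pos (Real.exp_pos _) hβ0)).2 h2
        _ = z * M + Real.log β⁻¹ := by
            rw [Real.log_div (Real.exp_ne_zero _) hβ0.ne', Real.log_exp,
              Real.log_inv]
            ring
    calc z⁻¹ * Real.log ((∫ ω, Real.exp (z * X ω) ∂P) / β)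
        ≤ z⁻¹ * (z * M + Real.log β⁻¹) :=
          mul_le_mul_of_nonneg_left hlog (inv_nonneg.2 hz.le)
      _ = M + z⁻¹ * Real.log β⁻¹ := by field_simp
  have hlogβ : 0 < Real.log β⁻¹ := Real.log_pos (by
    rw [lt_inv_comm₀] <;> simp [hβ0, hβ1] <;> linarith)
  have hupper : EVaR P β X ≤ M := by
    refine le_of_forall_gt_imp_ge_of_dense fun a ha => ?_
    set η := a - M with hη
    have hη0 : 0 < η := by simp [hη]; linarith
    have hz0 : 0 < Real.log β⁻¹ / η := div_pos hlogβ hη0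
    have := hup (Real.log β⁻¹ / η) hz0
    have hcalc : (Real.log β⁻¹ / η)⁻¹ * Real.log β⁻¹ = η := by
      rw [inv_div, div_mul_cancel₀ _ hlogβ.ne']
    rw [hcalc] at this
    linarith
  rw [Real.dist_eq]
  have : |EVaR P β X - M| ≤ ε' := by
    rw [abs_le]
    constructor <;> linarith
  linarith
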